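/- arXiv:2502.07232 — 5 statements merged into one kernel-verified Lean document; each statement's English description precedes it below -/
import Mathlib

section
/- Let X be a set, h : X → {0,1} a hypothesis, C ⊆ X a subset, and d a metric on X. Define nn_C(h)(x) = h(z) for some z minimizing d(x,c) over c ∈ C. Suppose C is an rγ-cover of X (for every x there exists c ∈ C with d(x,c) ≤ rγ). Then for every x, y ∈ X×{0,1}, if there exists z with d(x,z) ≤ r and nn_C(h)(z) ≠ y, then there exists c ∈ C with d(x,c) ≤ r(1+γ) and h(c) ≠ y. -/
/-- Pointwise loss comparison underlying RERM-and-Discretize: if `C` is an `rγ`-cover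
and `nn` selects a nearest point of `C`, then an adversarial error of `nn_C(h)` at radius `r`
yields an adversarial error of `h` on a point of `C` within radius `r(1+γ)`. -/
theorem stmt0 {X : Type*} [MetricSpace X] (C : Set X) (h : X → Bool)
    (r γ : ℝ) (hr : 0 < r) (hγ : 0 < γ)
    (nn : X → X) (hnnC : ∀ z, nn z ∈ C)
    (hnnmin : ∀ z, ∀ c ∈ C, dist z (nn z) ≤ dist z c)
    (hcover : ∀ x : X, ∃ c ∈ C, dist x c ≤ r * γ) :
    ∀ (x : X) (y : Bool), (∃ z : X, dist x z ≤ r ∧ h (nn z) ≠ y) →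
      ∃ c ∈ C, dist x c ≤ r * (1 + γ) ∧ h c ≠ y := by
  intro x y ⟨z, hz, hne⟩
  obtain ⟨c', hc'C, hc'⟩ := hcover z
  refine ⟨nn z, hnnC z, ?_, hne⟩
  calc dist x (nn z) ≤ dist x z + dist z (nn z) := dist_triangle _ _ _
    _ ≤ r + dist z c' := add_le_add hz (hnnmin z c' hc'C)
    _ ≤ r + r * γ := by linarith
    _ = r * (1 + γ) := by ring
end

section
/- Let X be a metric space, h : X → {0,1}, C an rγ-cover of X, U(x) = closed ball of radius r around x, V(x) = closed ball of radius r(1+γ), and 𝒞(x) = C ∩ V(x). Then for every labeled point (x,y), the adversarial loss indicator of nn_C(h) with respect to U at (x,y) is at most the adversarial loss indicator of h with respect to 𝒞 at (x,y), which in turn is at most the adversarial loss indicator of h with respect to V at (x,y). Here the adversarial loss indicator of g with respect to perturbation type W at (x,y) is 1 iff ∃z ∈ W(x) with g(z) ≠ y. -/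
/-- Pointwise chain of adversarial loss inequalities
`ℓ^U(nn_C(h),x,y) ≤ ℓ^𝒞(h,x,y) ≤ ℓ^V(h,x,y)` where `U(x) = B_r(x)`,
`V(x) = B_{r(1+γ)}(x)` and `𝒞(x) = C ∩ V(x)`, stated as implications between
the loss indicators (loss is 1 iff the corresponding existential holds). -/
theorem stmt1 {X : Type*} [MetricSpace X] (C : Set X) (h : X → Bool)
    (r γ : ℝ) (hr : 0 < r) (hγ : 0 < γ)
    (nn : X → X) (hnnC : ∀ z, nn z ∈ C)
    (hnnmin : ∀ z, ∀ c ∈ C, dist z (nn z) ≤ dist z c)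
    (hcover : ∀ x : X, ∃ c ∈ C, dist x c ≤ r * γ) :
    ∀ (x : X) (y : Bool),
      ((∃ z ∈ Metric.closedBall x r, h (nn z) ≠ y) →
        ∃ c ∈ C ∩ Metric.closedBall x (r * (1 + γ)), h c ≠ y) ∧
      ((∃ c ∈ C ∩ Metric.closedBall x (r * (1 + γ)), h c ≠ y) →
        ∃ z ∈ Metric.closedBall x (r * (1 + γ)), h z ≠ y) := by
  intro x y
  constructor
  · rintro ⟨z, hz, hne⟩
    refine ⟨nn z, ⟨hnnC z, ?_⟩, hne⟩
    obtain ⟨c, hc, hdc⟩ := hcover z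
    have h1 : dist z (nn z) ≤ r * γ := (hnnmin z c hc).trans hdc
    have h2 : dist x (nn z) ≤ dist x z + dist z (nn z) := dist_triangle _ _ _
    have hxz : dist x z ≤ r := by rw [dist_comm]; exact hz
    simp only [Metric.mem_closedBall, dist_comm]
    nlinarith
  · rintro ⟨c, ⟨_, hc⟩, hne⟩
    exact ⟨c, hc, hne⟩
end

section
/- Let H ⊆ {0,1}^X be a hypothesis class and C : X → Finset X a perturbation type with |C(x)| ≤ k for all x ∈ X, where k ≥ 2. Define the adversarial loss class H_C ⊆ 2^{X×{0,1}} by h_C = {(x,y) : ∃z ∈ C(x), h(z) ≠ y}. Then the VC dimension of H_C is at most VC(H) · log₂(k) up to a universal constant factor (VC(H_C) = O(VC(H) log k)). -/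
open Finset Real


lemma sum_choose_le_rpow {n d : ℕ} (hd : 1 ≤ d) (hdn : d ≤ n) :
    (∑ i ∈ range (d+1), (n.choose i) : ℝ) ≤ (Real.exp 1 * n / d) ^ d := by
  have hn0 : (0:ℝ) < n := by
    have : 1 ≤ n := le_trans hd hdn
    exact_mod_cast Nat.lt_of_lt_of_le Nat.zero_lt_one this
  have hd0 : (0:ℝ) < d := by exact_mod_cast hd
  set x : ℝ := (d:ℝ) / n with hxdef
  have hx0 : 0 < x := by positivity
  have hx1 : x ≤ 1 := by
    rw [div_le_one hn0]; exact_mod_cast hdn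
  have key : x ^ d * ∑ i ∈ range (d+1), (n.choose i : ℝ) ≤ (x + 1) ^ n := by
    rw [mul_sum]
    have h1 : ∀ i ∈ range (d+1), (x ^ d * (n.choose i : ℝ)) ≤ x ^ i * (n.choose i : ℝ) := by
      intro i hi
      have : i ≤ d := Nat.lt_succ_iff.mp (mem_range.mp hi)
      exact mul_le_mul_of_nonneg_right (pow_le_pow_of_le_one hx0.le hx1 this) (by positivity)
    calc ∑ i ∈ range (d+1), x ^ d * (n.choose i : ℝ)
        ≤ ∑ i ∈ range (d+1), x ^ i * (n.choose i : ℝ) := Finset.sum_le_sum h1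
      _ ≤ ∑ i ∈ range (n+1), x ^ i * (n.choose i : ℝ) := by
          apply Finset.sum_le_sum_of_subset_of_nonneg
          · exact Finset.range_subset_range.mpr (by omega)
          · intro i _ _; positivity
      _ = (x + 1) ^ n := by
          rw [add_pow]
          apply Finset.sum_congr rfl
          intro i _
          norm_num
  have h2 : (x + 1) ^ n ≤ Real.exp d := by
    calc (x + 1) ^ n ≤ (Real.exp x) ^ n := by
          apply pow_le_pow_left₀ (by positivity)
          linarith [Real.add_one_le_exp x]
      _ = Real.exp (x * n) := by rw [← Real.exp_nat_mul]; ring_nf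
      _ = Real.exp d := by
          congr 1
          rw [hxdef, div_mul_cancel₀ _ (ne_of_gt hn0)]
  have h3 : ∑ i ∈ range (d+1), (n.choose i : ℝ) ≤ Real.exp d / x ^ d := by
    rw [le_div_iff₀ (by positivity)]
    calc (∑ i ∈ range (d+1), (n.choose i : ℝ)) * x ^ d
        = x ^ d * ∑ i ∈ range (d+1), (n.choose i : ℝ) := by ring
      _ ≤ (x + 1) ^ n := key
      _ ≤ Real.exp d := h2
  calc (∑ i ∈ range (d+1), (n.choose i) : ℝ) ≤ Real.exp d / x ^ d := h3
    _ = (Real.exp 1 * n / d) ^ d := by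
        rw [← Real.exp_one_pow, hxdef, div_pow, div_pow, mul_pow]
        field_simp

-- t ≤ 2^(t/2) for t ≥ 100
lemma self_le_rpow {t : ℝ} (ht : 100 ≤ t) : t ≤ (2:ℝ) ^ (t/2 : ℝ) := by
  have ht0 : (0:ℝ) < t := by linarith
  have hst : (10:ℝ) ≤ Real.sqrt t := by
    have : Real.sqrt 100 ≤ Real.sqrt t := Real.sqrt_le_sqrt ht
    calc (10:ℝ) = Real.sqrt 100 := by
          rw [show (100:ℝ) = 10^2 by norm_num, Real.sqrt_sq (by norm_num)]
      _ ≤ Real.sqrt t := this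
  have hst0 : (0:ℝ) < Real.sqrt t := by linarith
  have hsq : Real.sqrt t * Real.sqrt t = t := Real.mul_self_sqrt ht0.le
  have hlogt : Real.log t ≤ 2 * Real.sqrt t := by
    have h1 : Real.log (Real.sqrt t) ≤ Real.sqrt t - 1 := Real.log_le_sub_one_of_pos hst0
    have h2 : Real.log t = 2 * Real.log (Real.sqrt t) := by
      rw [Real.log_sqrt ht0.le]; ring
    linarith
  have hs2 : Real.sqrt t ≤ t / 10 := by
    rw [le_div_iff₀ (by norm_num)]
    calc Real.sqrt t * 10 ≤ Real.sqrt t * Real.sqrt t := by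
          apply mul_le_mul_of_nonneg_left hst hst0.le
      _ = t := hsq
  have hlog2 : (0.6931471803:ℝ) < Real.log 2 := Real.log_two_gt_d9
  have key : Real.log t ≤ (t/2) * Real.log 2 := by nlinarith
  calc t = Real.exp (Real.log t) := (Real.exp_log ht0).symm
    _ ≤ Real.exp ((t/2) * Real.log 2) := Real.exp_le_exp.mpr key
    _ = (2:ℝ) ^ (t/2 : ℝ) := by
        rw [Real.rpow_def_of_pos (by norm_num)]
        ring_nf

lemma numeric (m n k d : ℕ) (hk : 2 ≤ k) (hnk : n ≤ m * k)
    (hcnt : 2^m ≤ ∑ i ∈ range (d+1), n.choose i) :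
    (m:ℝ) ≤ 100 * d * Real.logb 2 k := by
  have hk0 : (0:ℝ) < k := by positivity
  have hL : 1 ≤ Real.logb 2 k := by
    rw [show (1:ℝ) = Real.logb 2 2 by simp]
    exact Real.logb_le_logb_of_le (by norm_num) (by norm_num) (by exact_mod_cast hk)
  set L := Real.logb 2 k with hLdef
  -- case d = 0
  rcases Nat.eq_zero_or_pos d with hd0 | hd
  · subst hd0
    simp only [zero_add, range_one, sum_singleton, Nat.choose_zero_right] at hcnt
    have : m = 0 := by
      by_contra hm
      have : 2 ≤ 2^m := Nat.le_self_pow hm 2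
      omega
    rw [this]
    norm_num
  -- case n < d
  rcases le_or_gt d n with hdn | hnd
  swap
  · have hsum : ∑ i ∈ range (d+1), n.choose i = 2^n := by
      rw [← Nat.sum_range_choose n]
      refine (Finset.sum_subset (Finset.range_subset_range.mpr (by omega)) ?_).symm
      intro i _ hi
      simp only [Finset.mem_range, not_lt] at hi
      exact Nat.choose_eq_zero_of_lt (by omega)
    rw [hsum] at hcnt
    have hmn : m ≤ n := (Nat.pow_le_pow_iff_right (by norm_num)).mp hcnt
    have : (m:ℝ) ≤ d := by exact_mod_cast (by omega : m ≤ d)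
    have hd1 : (1:ℝ) ≤ d := by exact_mod_cast hd
    nlinarith
  -- main case 1 ≤ d ≤ n
  rcases Nat.eq_zero_or_pos m with hm0 | hm
  · simp [hm0]; positivity
  by_contra hcon
  push_neg at hcon
  have hd0 : (0:ℝ) < d := by exact_mod_cast hd
  have hm0 : (0:ℝ) < m := by exact_mod_cast hm
  set t : ℝ := (m:ℝ) / d with htdef
  have ht : 100 * L < t := by
    rw [htdef, lt_div_iff₀ hd0]
    nlinarith
  have ht100 : (100:ℝ) ≤ t := by nlinarith
  -- counting chain in ℝ
  have hreal : (2:ℝ)^m ≤ (Real.exp 1 * ((m:ℝ) * k) / d) ^ d := by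
    calc (2:ℝ)^m ≤ ∑ i ∈ range (d+1), (n.choose i : ℝ) := by
          exact_mod_cast hcnt
      _ ≤ (Real.exp 1 * n / d) ^ d := sum_choose_le_rpow hd hdn
      _ ≤ (Real.exp 1 * ((m:ℝ) * k) / d) ^ d := by
          have hcast : (n:ℝ) ≤ (m:ℝ) * k := by exact_mod_cast hnk
          gcongr
  -- take d-th roots
  have hbase : (2:ℝ) ^ (t:ℝ) ≤ Real.exp 1 * k * t := by
    have h1 : ((2:ℝ) ^ (t:ℝ)) ^ d = (2:ℝ)^m := by
      rw [← Real.rpow_natCast ((2:ℝ) ^ (t:ℝ)) d, ← Real.rpow_mul (by norm_num)]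
      rw [htdef, div_mul_cancel₀ _ (ne_of_gt hd0)]
      rw [Real.rpow_natCast]
    have h2 : Real.exp 1 * ((m:ℝ) * k) / d = Real.exp 1 * k * t := by
      rw [htdef]; ring
    rw [h2] at hreal
    rw [← h1] at hreal
    have hrow : (0:ℝ) ≤ (2:ℝ) ^ (t:ℝ) := by positivity
    exact (pow_le_pow_iff_left₀ hrow (by positivity) (by omega)).mp hreal
  -- upper bound RHS by 2^(2 + L + t/2)
  have he : Real.exp 1 ≤ 3 := by
    have := Real.exp_one_lt_d9
    linarith
  have hkL : (k:ℝ) = (2:ℝ) ^ (L:ℝ) := by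
    rw [hLdef, Real.rpow_logb (by norm_num) (by norm_num) hk0]
  have htle : t ≤ (2:ℝ) ^ (t/2 : ℝ) := self_le_rpow ht100
  have hub : Real.exp 1 * k * t < (2:ℝ) ^ ((2:ℝ) + L + t/2) := by
    have h4 : (Real.exp 1) * k * t < 4 * ((2:ℝ)^(L:ℝ) * (2:ℝ)^(t/2:ℝ)) := by
      have hkpos : (0:ℝ) < (2:ℝ)^(L:ℝ) := by positivity
      have htpos : (0:ℝ) < t := by linarith
      have hkt : (k:ℝ) * t ≤ (2:ℝ)^(L:ℝ) * (2:ℝ)^(t/2:ℝ) := by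
        apply mul_le_mul (le_of_eq hkL) htle htpos.le (by positivity)
      nlinarith [Real.exp_pos 1, mul_pos (mul_pos hk0 htpos) (Real.exp_pos 1)]
    calc Real.exp 1 * k * t < 4 * ((2:ℝ)^(L:ℝ) * (2:ℝ)^(t/2:ℝ)) := h4
      _ = (2:ℝ) ^ ((2:ℝ) + L + t/2) := by
          rw [Real.rpow_add (by norm_num), Real.rpow_add (by norm_num)]
          norm_num [Real.rpow_two]
          ring
  have hlt : (2:ℝ) ^ ((2:ℝ) + L + t/2) < (2:ℝ) ^ (t:ℝ) := by
    apply Real.rpow_lt_rpow_left_iff (by norm_num : (1:ℝ) < 2) |>.mpr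
    linarith
  linarith [hbase, hub, hlt]

/-- A class of boolean functions `F` on `Z` shatters the finite set `K`. -/
def ShattersFun {Z : Type*} (F : Set (Z → Bool)) (K : Finset Z) : Prop :=
  ∀ T ⊆ K, ∃ f ∈ F, ∀ z ∈ K, (f z = true ↔ z ∈ T)

/-- Lemma 2.6 (Attias–Kontorovich–Mansour): if every perturbation set `per x` has at
most `k ≥ 2` elements and `VC(H) ≤ d`, then the VC dimension of the adversarial loss
class `H_C = {(x,y) ↦ [∃ z ∈ per x, h z ≠ y]}` is `O(d log k)`: there is a universal
constant `c` bounding the size of every shattered set by `c · d · log₂ k`. -/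
theorem stmt6 : ∃ c : ℝ, 0 < c ∧
    ∀ (X : Type) (H : Set (X → Bool)) (per : X → Finset X) (k d : ℕ),
      2 ≤ k → (∀ x, (per x).card ≤ k) →
      (∀ K : Finset X, ShattersFun H K → K.card ≤ d) →
      ∀ K : Finset (X × Bool),
        ShattersFun ((fun h => fun p : X × Bool =>
          decide (∃ z ∈ per p.1, h z ≠ p.2)) '' H) K →
        (K.card : ℝ) ≤ c * d * Real.logb 2 k := by
  classical
  refine ⟨100, by norm_num, ?_⟩
  intro X H per k d hk hper hVC K hK
  set F : (X → Bool) → (X × Bool) → Bool :=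
    fun h => fun p : X × Bool => decide (∃ z ∈ per p.1, h z ≠ p.2) with hF
  set S : Finset X := K.biUnion (fun p => per p.1) with hS
  set n : ℕ := S.card with hn
  set m : ℕ := K.card with hm
  -- n ≤ m * k
  have hnk : n ≤ m * k := by
    calc n ≤ ∑ p ∈ K, (per p.1).card := Finset.card_biUnion_le
      _ ≤ ∑ _p ∈ K, k := Finset.sum_le_sum (fun p _ => hper p.1)
      _ = m * k := by rw [Finset.sum_const, smul_eq_mul]
  -- for each T ⊆ K choose a hypothesis realizing pattern T
  have hchoice : ∀ T ∈ K.powerset, ∃ h ∈ H, ∀ p ∈ K, (F h p = true ↔ p ∈ T) := by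
    intro T hT
    obtain ⟨f, hfH, hfpat⟩ := hK T (Finset.mem_powerset.mp hT)
    obtain ⟨h, hhH, rfl⟩ := hfH
    exact ⟨h, hhH, hfpat⟩
  choose! hyp hypH hyppat using hchoice
  -- the family of realized behaviors on S
  set 𝒜 : Finset (Finset X) :=
    S.powerset.filter (fun A => ∃ h ∈ H, ∀ z ∈ S, (h z = true ↔ z ∈ A)) with hA
  -- Step A : 2^m ≤ 𝒜.card
  have hperS : ∀ p ∈ K, per p.1 ⊆ S := by
    intro p hp
    exact Finset.subset_biUnion_of_mem (fun q => per q.1) hp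
  have stepA : 2^m ≤ 𝒜.card := by
    rw [hm, ← Finset.card_powerset]
    apply Finset.card_le_card_of_injOn (fun T => S.filter (fun z => hyp T z = true))
    · intro T hT
      rw [hA, Finset.mem_coe, Finset.mem_filter]
      refine ⟨Finset.mem_powerset.mpr (Finset.filter_subset _ _), hyp T, hypH T hT, ?_⟩
      intro z hz
      simp [Finset.mem_filter, hz]
    · intro T₁ h₁ T₂ h₂ heq
      simp only [Finset.mem_coe] at h₁ h₂
      dsimp only at heq
      have hagree : ∀ z ∈ S, hyp T₁ z = hyp T₂ z := by
        intro z hz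
        have e1 : z ∈ S.filter (fun z => hyp T₁ z = true) ↔ z ∈ S.filter (fun z => hyp T₂ z = true) := by
          rw [heq]
        simp only [Finset.mem_filter, hz, true_and] at e1
        rcases Bool.eq_false_or_eq_true (hyp T₁ z) with h | h <;>
          rcases Bool.eq_false_or_eq_true (hyp T₂ z) with h' | h' <;>
          simp_all
      have hFagree : ∀ p ∈ K, F (hyp T₁) p = F (hyp T₂) p := by
        intro p hp
        rw [hF]
        simp only
        apply decide_eq_decide.mpr
        constructor
        · rintro ⟨z, hzp, hzne⟩
          exact ⟨z, hzp, by rw [← hagree z (hperS p hp hzp)]; exact hzne⟩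
        · rintro ⟨z, hzp, hzne⟩
          exact ⟨z, hzp, by rw [hagree z (hperS p hp hzp)]; exact hzne⟩
      ext p
      by_cases hp : p ∈ K
      · rw [← hyppat T₁ h₁ p hp, ← hyppat T₂ h₂ p hp, hFagree p hp]
      · constructor
        · intro hmem; exact absurd (Finset.mem_powerset.mp h₁ hmem) hp
        · intro hmem; exact absurd (Finset.mem_powerset.mp h₂ hmem) hp
  -- Step B : every set shattered by 𝒜 has size ≤ d
  have stepB : 𝒜.shatterer ⊆ S.powerset.filter (fun s => s.card ≤ d) := by
    intro s hs
    rw [Finset.mem_shatterer] at hs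
    have hsS : s ⊆ S := by
      obtain ⟨u, hu𝒜, hsu⟩ := hs.exists_superset
      rw [hA, Finset.mem_filter, Finset.mem_powerset] at hu𝒜
      exact hsu.trans hu𝒜.1
    have hshat : ShattersFun H s := by
      intro T hT
      obtain ⟨u, hu𝒜, hsu⟩ := hs hT
      rw [hA, Finset.mem_filter] at hu𝒜
      obtain ⟨_, h, hhH, hhu⟩ := hu𝒜
      refine ⟨h, hhH, ?_⟩
      intro z hz
      rw [hhu z (hsS hz), ← hsu, Finset.mem_inter]
      simp [hz]
    exact Finset.mem_filter.mpr ⟨Finset.mem_powerset.mpr hsS, hVC s hshat⟩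
  -- Step C : count
  have stepC : (S.powerset.filter (fun s => s.card ≤ d)).card ≤ ∑ i ∈ range (d+1), n.choose i := by
    have : S.powerset.filter (fun s => s.card ≤ d) = (range (d+1)).biUnion (fun i => S.powersetCard i) := by
      ext s
      simp only [Finset.mem_filter, Finset.mem_powerset, Finset.mem_biUnion, Finset.mem_range,
        Finset.mem_powersetCard, Nat.lt_succ_iff]
      constructor
      · rintro ⟨h1, h2⟩; exact ⟨s.card, h2, h1, rfl⟩
      · rintro ⟨i, hi, h1, rfl⟩; exact ⟨h1, hi⟩
    rw [this]
    calc ((range (d+1)).biUnion (fun i => S.powersetCard i)).card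
        ≤ ∑ i ∈ range (d+1), (S.powersetCard i).card := Finset.card_biUnion_le
      _ = ∑ i ∈ range (d+1), n.choose i := by
          apply Finset.sum_congr rfl
          intro i _
          rw [Finset.card_powersetCard, hn]
  have hcnt : 2^m ≤ ∑ i ∈ range (d+1), n.choose i :=
    le_trans stepA <| le_trans 𝒜.card_le_card_shatterer <|
      le_trans (Finset.card_le_card stepB) stepC
  exact numeric m n k d hk hnk hcnt
end

section
/- If a set system 𝒞 on Z with VC dimension d shatters (via its robust/derived loss) a set of m points where each point contributes at most k candidate elements, then 2^m ≤ (m k)^d whenever m k ≥ d ≥ 1; consequently m ≤ C · d · log₂(k+1) for some universal constant C (for k ≥ 2). -/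
open Finset

lemma aux_sum_range_choose_le (n d : ℕ) : ∑ i ∈ range (d+1), n.choose i ≤ 2 ^ n := by
  calc ∑ i ∈ range (d+1), n.choose i
      ≤ ∑ i ∈ range (max d n + 1), n.choose i := by
        apply Finset.sum_le_sum_of_subset
        exact Finset.range_subset_range.2 (by omega)
    _ = ∑ i ∈ range (n + 1), n.choose i := by
        refine (Finset.sum_subset (Finset.range_subset_range.2 (by omega)) ?_).symm
        intro i _ hi
        exact Nat.choose_eq_zero_of_lt (by simp at hi ⊢; omega)
    _ = 2 ^ n := Nat.sum_range_choose n

lemma aux_sum_choose_le_pow (n d : ℕ) (hn : 2 ≤ n) (hd : 2 ≤ d) :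
    ∑ i ∈ range (d+1), n.choose i ≤ n ^ d := by
  induction d, hd using Nat.le_induction with
  | base =>
      have h2 : n.choose 2 * 2 = n.choose 1 * (n - 1) := Nat.choose_succ_right_eq n 1
      simp only [Finset.sum_range_succ, Finset.sum_range_zero, Nat.choose_zero_right,
        Nat.choose_one_right] at *
      nlinarith [h2, hn, Nat.sub_add_cancel (by omega : 1 ≤ n)]
  | succ d hd ih =>
      rw [Finset.sum_range_succ]
      have hCd : n.choose d ≤ n ^ d :=
        le_trans (Finset.single_le_sum (f := fun i => n.choose i) (fun _ _ => Nat.zero_le _)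
          (Finset.self_mem_range_succ d)) ih
      have h2 : n.choose (d+1) * (d+1) = n.choose d * (n - d) := Nat.choose_succ_right_eq n d
      have h3 : n.choose (d+1) * 3 ≤ n ^ d * n := by
        calc n.choose (d+1) * 3 ≤ n.choose (d+1) * (d+1) := by
              apply Nat.mul_le_mul_left; omega
          _ = n.choose d * (n - d) := h2
          _ ≤ n ^ d * n := Nat.mul_le_mul hCd (by omega)
      have hP : 1 ≤ n ^ d := Nat.one_le_pow _ _ (by omega)
      have := ih
      rw [pow_succ]
      nlinarith [h3, hP, hn, this]

lemma aux_not_dvd_two_pow_sub_one (m : ℕ) (hm : 2 ≤ m) : ¬ m ∣ 2 ^ m - 1 := by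
  intro hdvd
  have hm0 : m ≠ 1 := by omega
  set p := m.minFac with hp
  have hpp : p.Prime := Nat.minFac_prime hm0
  have hpm : p ∣ m := Nat.minFac_dvd m
  have hpd : p ∣ 2 ^ m - 1 := hpm.trans hdvd
  have hpow : 1 ≤ 2 ^ m := Nat.one_le_two_pow
  have hp2 : p ≠ 2 := by
    intro h
    rw [h] at hpd
    obtain ⟨c, hc⟩ := hpd
    obtain ⟨e, he⟩ := dvd_pow_self 2 (by omega : m ≠ 0)
    omega
  haveI := Fact.mk hpp
  have hp3 : 3 ≤ p := by
    have := hpp.two_le; omega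
  have h2m : (2 : ZMod p) ^ m = 1 := by
    have h1 : ((2 ^ m - 1 : ℕ) : ZMod p) = 0 := (ZMod.natCast_eq_zero_iff _ _).2 hpd
    have he : 2 ^ m - 1 + 1 = 2 ^ m := by omega
    calc (2 : ZMod p) ^ m = ((2 ^ m : ℕ) : ZMod p) := by push_cast; ring
      _ = ((2 ^ m - 1 + 1 : ℕ) : ZMod p) := by rw [he]
      _ = 1 := by push_cast [h1]; ring
  have h2ne0 : (2 : ZMod p) ≠ 0 := by
    have : ((2 : ℕ) : ZMod p) ≠ 0 := by
      rw [Ne, ZMod.natCast_eq_zero_iff]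
      intro h
      have := (Nat.prime_dvd_prime_iff_eq hpp Nat.prime_two).1 h
      exact hp2 this
    simpa using this
  have h2ne1 : (2 : ZMod p) ≠ 1 := by
    intro h
    have : ((2 : ℕ) : ZMod p) = ((1 : ℕ) : ZMod p) := by push_cast; simpa using h
    have := (ZMod.natCast_eq_natCast_iff _ _ _).1 this
    have := (Nat.modEq_iff_dvd' (by omega)).1 this.symm
    have : p ≤ 1 := Nat.le_of_dvd (by omega) this
    omega
  set r := orderOf (2 : ZMod p) with hr
  have hr1 : r ∣ m := orderOf_dvd_of_pow_eq_one h2m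
  have hrp : r ∣ p - 1 := ZMod.orderOf_dvd_card_sub_one h2ne0
  have hrne1 : r ≠ 1 := by
    intro h
    exact h2ne1 (orderOf_eq_one_iff.1 h)
  set q := r.minFac with hq
  have hqp : q.Prime := Nat.minFac_prime hrne1
  have hqm : q ∣ m := (Nat.minFac_dvd r).trans hr1
  have h1 : p ≤ q := Nat.minFac_le_of_dvd hqp.two_le hqm
  have h2 : q ≤ p - 1 := Nat.le_of_dvd (by omega) ((Nat.minFac_dvd r).trans hrp)
  omega

lemma aux_log_le_half (x : ℝ) (hx : 0 < x) : Real.log x ≤ x / 2 := by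
  have hs : 0 < Real.sqrt x := Real.sqrt_pos.2 hx
  have h1 : Real.log (Real.sqrt x) ≤ Real.sqrt x - 1 := Real.log_le_sub_one_of_pos hs
  have h2 : Real.sqrt x ≤ x / 4 + 1 := by
    nlinarith [Real.sq_sqrt hx.le, sq_nonneg (Real.sqrt x - 2)]
  have h3 : Real.log x = 2 * Real.log (Real.sqrt x) := by
    rw [Real.log_sqrt hx.le]; ring
  nlinarith

lemma aux_sum_choose_le_exp (M d : ℕ) (hd : 1 ≤ d) (hdM : d ≤ M) :
    ((∑ i ∈ range (d+1), M.choose i : ℕ) : ℝ) ≤ Real.exp d * ((M : ℝ) / d) ^ d := by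
  have hM0 : 0 < (M : ℝ) := by
    have : 1 ≤ M := le_trans hd hdM
    exact_mod_cast Nat.lt_of_lt_of_le Nat.zero_lt_one this
  have hd0 : 0 < (d : ℝ) := by exact_mod_cast hd
  set t : ℝ := (d : ℝ) / M with ht
  have ht0 : 0 < t := by positivity
  have ht1 : t ≤ 1 := by
    rw [ht, div_le_one hM0]; exact_mod_cast hdM
  have htd : 0 < t ^ d := pow_pos ht0 d
  have key : ((∑ i ∈ range (d+1), M.choose i : ℕ) : ℝ) * t ^ d ≤ (1 + t) ^ M := by
    push_cast
    rw [Finset.sum_mul]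
    calc ∑ i ∈ range (d+1), (M.choose i : ℝ) * t ^ d
        ≤ ∑ i ∈ range (d+1), t ^ i * 1 ^ (M - i) * (M.choose i : ℝ) := by
          apply Finset.sum_le_sum
          intro i hi
          rw [one_pow, mul_one]
          rw [mul_comm (t ^ i)]
          apply mul_le_mul_of_nonneg_left _ (by positivity)
          exact pow_le_pow_of_le_one ht0.le ht1 (by simp at hi; omega)
      _ ≤ ∑ i ∈ range (M+1), t ^ i * 1 ^ (M - i) * (M.choose i : ℝ) := by
          apply Finset.sum_le_sum_of_subset_of_nonneg (Finset.range_subset_range.2 (by omega))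
          intro i _ _; positivity
      _ = (t + 1) ^ M := (add_pow t 1 M).symm
      _ = (1 + t) ^ M := by ring
  have hexp : (1 + t) ^ M ≤ Real.exp d := by
    have h1 : (1 + t) ^ M ≤ Real.exp t ^ M := by
      apply pow_le_pow_left₀ (by positivity)
      linarith [Real.add_one_le_exp t]
    have h2 : Real.exp t ^ M = Real.exp (t * M) := by
      rw [← Real.exp_nat_mul]; ring_nf
    have h3 : t * M = d := by rw [ht]; field_simp
    rw [h2, h3] at h1; exact h1
  have := le_trans key hexp
  rw [← le_div_iff₀ htd] at this
  calc ((∑ i ∈ range (d+1), M.choose i : ℕ) : ℝ) ≤ Real.exp d / t ^ d := this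
    _ = Real.exp d * ((M : ℝ) / d) ^ d := by
        rw [div_eq_mul_inv, ← inv_pow]
        congr 2
        rw [ht]; field_simp

lemma aux_traces_card_le {Z : Type} (H : Set (Z → Bool)) (d : ℕ) (N : Finset Z)
    (VC : ∀ K : Finset Z, ShattersFun H K → K.card ≤ d) :
    (@Finset.filter _ (fun A => ∃ h ∈ H, A = N.filter (fun z => h z = true))
      (Classical.decPred _) N.powerset).card
      ≤ ∑ i ∈ range (d+1), N.card.choose i := by
  classical
  set 𝒜 := @Finset.filter _ (fun A => ∃ h ∈ H, A = N.filter (fun z => h z = true))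
      (Classical.decPred _) N.powerset with h𝒜
  have h1 : 𝒜.card ≤ 𝒜.shatterer.card := Finset.card_le_card_shatterer 𝒜
  have h2 : 𝒜.shatterer ⊆ (range (d+1)).biUnion (fun i => N.powersetCard i) := by
    intro s hs
    have hsh : 𝒜.Shatters s := Finset.mem_shatterer.1 hs
    have hsN : s ⊆ N := by
      obtain ⟨u, hu, hsu⟩ := hsh (Finset.Subset.refl s)
      have hus : s ⊆ u := by
        intro z hz
        have hz2 : z ∈ s ∩ u := by rw [hsu]; exact hz
        exact (Finset.mem_inter.1 hz2).2
      have huN : u ⊆ N := Finset.mem_powerset.1 (Finset.mem_filter.1 hu).1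
      exact hus.trans huN
    have hSF : ShattersFun H s := by
      intro T hT
      obtain ⟨u, hu, hsu⟩ := hsh hT
      obtain ⟨h, hhH, hueq⟩ := (Finset.mem_filter.1 hu).2
      refine ⟨h, hhH, fun z hz => ?_⟩
      constructor
      · intro hzt
        have hzu : z ∈ u := by rw [hueq]; exact Finset.mem_filter.2 ⟨hsN hz, hzt⟩
        rw [← hsu]; exact Finset.mem_inter.2 ⟨hz, hzu⟩
      · intro hzT
        have hz2 : z ∈ s ∩ u := by rw [hsu]; exact hzT
        have hzu : z ∈ u := (Finset.mem_inter.1 hz2).2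
        rw [hueq] at hzu
        exact (Finset.mem_filter.1 hzu).2
    have hcard : s.card ≤ d := VC s hSF
    apply Finset.mem_biUnion.2
    exact ⟨s.card, Finset.mem_range.2 (by omega),
      (Finset.mem_powersetCard).2 ⟨hsN, rfl⟩⟩
  calc 𝒜.card ≤ 𝒜.shatterer.card := h1
    _ ≤ ((range (d+1)).biUnion (fun i => N.powersetCard i)).card :=
        Finset.card_le_card h2
    _ ≤ ∑ i ∈ range (d+1), (N.powersetCard i).card := Finset.card_biUnion_le
    _ = ∑ i ∈ range (d+1), N.card.choose i := by
        apply Finset.sum_congr rfl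
        intro i _
        exact Finset.card_powersetCard i N

lemma aux_key {Z : Type} (H : Set (Z → Bool)) (per : Z → Finset Z) (d : ℕ)
    (VC : ∀ K : Finset Z, ShattersFun H K → K.card ≤ d)
    (K : Finset (Z × Bool))
    (Hsh : ShattersFun ((fun h => fun p : Z × Bool =>
      decide (∃ z ∈ per p.1, h z ≠ p.2)) '' H) K) :
    2 ^ K.card ≤ ∑ i ∈ range (d+1),
      (@Finset.biUnion _ _ (Classical.decEq Z) K (fun p => per p.1)).card.choose i := by
  classical
  set N := @Finset.biUnion _ _ (Classical.decEq Z) K (fun p => per p.1) with hN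
  set 𝒜 := @Finset.filter _ (fun A => ∃ h ∈ H, A = N.filter (fun z => h z = true))
      (Classical.decPred _) N.powerset with h𝒜
  have Hsh' : ∀ T ∈ K.powerset, ∃ h ∈ H, ∀ p ∈ K,
      ((decide (∃ z ∈ per p.1, h z ≠ p.2) = true) ↔ p ∈ T) := by
    intro T hT
    obtain ⟨f, hfF, hf⟩ := Hsh T (Finset.mem_powerset.1 hT)
    obtain ⟨h, hH, rfl⟩ := hfF
    exact ⟨h, hH, hf⟩
  choose hfun hfunH hfunP using Hsh'
  set F' : Finset (Z × Bool) → Z → Bool := fun T =>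
    if hT : T ∈ K.powerset then hfun T hT else fun _ => false with hF'
  set Φ : Finset (Z × Bool) → Finset Z := fun T => N.filter (fun z => F' T z = true) with hΦ
  have hF'eq : ∀ (T) (hT : T ∈ K.powerset), F' T = hfun T hT := by
    intro T hT
    rw [hF']
    exact dif_pos hT
  have memΦ : ∀ (S : Finset (Z × Bool)) (hS : S ∈ K.powerset) (z : Z), z ∈ N →
      ((z ∈ Φ S) ↔ hfun S hS z = true) := by
    intro S hS z hzN
    rw [hΦ]
    simp only [Finset.mem_filter, hF'eq S hS]
    exact ⟨fun h => h.2, fun h => ⟨hzN, h⟩⟩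
  have hmaps : ∀ T ∈ K.powerset, Φ T ∈ 𝒜 := by
    intro T hT
    rw [h𝒜]
    apply Finset.mem_filter.2
    refine ⟨Finset.mem_powerset.2 ?_, ⟨hfun T hT, hfunH T hT, ?_⟩⟩
    · rw [hΦ]; exact Finset.filter_subset _ _
    · rw [hΦ]
      show N.filter (fun z => F' T z = true) = N.filter (fun z => hfun T hT z = true)
      rw [hF'eq T hT]
  have hinj : Set.InjOn Φ K.powerset := by
    intro T hTc T' hT'c heq
    have hT : T ∈ K.powerset := Finset.mem_coe.1 hTc
    have hT' : T' ∈ K.powerset := Finset.mem_coe.1 hT'c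
    have hTK : T ⊆ K := Finset.mem_powerset.1 hT
    have hT'K : T' ⊆ K := Finset.mem_powerset.1 hT'
    have hagree : ∀ p ∈ K, ∀ z ∈ per p.1, hfun T hT z = hfun T' hT' z := by
      intro p hpK z hz
      have hzN : z ∈ N := by
        rw [hN]; exact Finset.mem_biUnion.2 ⟨p, hpK, hz⟩
      have e1 := memΦ T hT z hzN
      have e2 := memΦ T' hT' z hzN
      rw [heq] at e1
      cases hb : hfun T hT z <;> cases hb' : hfun T' hT' z <;> simp_all
    apply Finset.ext
    intro p
    constructor <;> intro hp
    · have hpK : p ∈ K := hTK hp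
      have h1 : (decide (∃ z ∈ per p.1, hfun T hT z ≠ p.2) = true) := (hfunP T hT p hpK).2 hp
      have h2 : (∃ z ∈ per p.1, hfun T' hT' z ≠ p.2) := by
        obtain ⟨z, hz, hne⟩ := of_decide_eq_true h1
        exact ⟨z, hz, by rw [← hagree p hpK z hz]; exact hne⟩
      exact (hfunP T' hT' p hpK).1 (decide_eq_true h2)
    · have hpK : p ∈ K := hT'K hp
      have h1 : (decide (∃ z ∈ per p.1, hfun T' hT' z ≠ p.2) = true) := (hfunP T' hT' p hpK).2 hp
      have h2 : (∃ z ∈ per p.1, hfun T hT z ≠ p.2) := by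
        obtain ⟨z, hz, hne⟩ := of_decide_eq_true h1
        exact ⟨z, hz, by rw [hagree p hpK z hz]; exact hne⟩
      exact (hfunP T hT p hpK).1 (decide_eq_true h2)
  have hcard : K.powerset.card ≤ 𝒜.card := Finset.card_le_card_of_injOn Φ hmaps hinj
  rw [Finset.card_powerset] at hcard
  exact le_trans hcard (aux_traces_card_le H d N VC)

/-- Abstract counting form of the VC bound for finite-perturbation loss classes:
if a class `H` of VC dimension at most `d` induces a robust-loss class that shatters
`m` labeled points, where each point contributes at most `k` candidate perturbations,
then `2^m ≤ (mk)^d` (whenever `mk ≥ d ≥ 1`), and consequently `m ≤ c · d · log₂(k+1)`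
for a universal constant `c` (for `k ≥ 2`). -/
theorem stmt7 : ∃ c : ℝ, 0 < c ∧
    ∀ (Z : Type) (H : Set (Z → Bool)) (per : Z → Finset Z) (m k d : ℕ),
      1 ≤ d → d ≤ m * k → 2 ≤ k →
      (∀ x, (per x).card ≤ k) →
      (∀ K : Finset Z, ShattersFun H K → K.card ≤ d) →
      ∀ K : Finset (Z × Bool), K.card = m →
        ShattersFun ((fun h => fun p : Z × Bool =>
          decide (∃ z ∈ per p.1, h z ≠ p.2)) '' H) K →
        2 ^ m ≤ (m * k) ^ d ∧ (m : ℝ) ≤ c * d * Real.logb 2 (k + 1) := by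
  refine ⟨100, by norm_num, ?_⟩
  intro Z H per m k d hd hdmk hk hper VC K hKcard Hsh
  classical
  have hm1 : 1 ≤ m := by
    rcases m with _ | m
    · simp at hdmk; omega
    · omega
  set N := @Finset.biUnion _ _ (Classical.decEq Z) K (fun p => per p.1) with hN
  have hkey : 2 ^ m ≤ ∑ i ∈ range (d+1), N.card.choose i := by
    have := aux_key H per d VC K Hsh
    rwa [hKcard] at this
  have hnmk : N.card ≤ m * k := by
    calc N.card ≤ ∑ p ∈ K, (per p.1).card := Finset.card_biUnion_le
      _ ≤ ∑ _p ∈ K, k := Finset.sum_le_sum (fun p _ => hper p.1)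
      _ = m * k := by rw [Finset.sum_const, hKcard, smul_eq_mul]
  have part1 : 2 ^ m ≤ (m * k) ^ d := by
    rcases Nat.lt_or_ge N.card 2 with hn | hn
    · have h2 : 2 ^ m ≤ 2 ^ N.card := le_trans hkey (aux_sum_range_choose_le _ _)
      have hm : m ≤ N.card := (Nat.pow_le_pow_iff_right (by norm_num : 1 < 2)).1 h2
      have hmeq : m = 1 := by omega
      rw [hmeq]
      calc 2 ^ 1 = 2 := rfl
        _ ≤ k := hk
        _ = 1 * k := (one_mul k).symm
        _ ≤ (1 * k) ^ d := Nat.le_self_pow (by omega) _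
    · rcases Nat.lt_or_ge d 2 with hd2 | hd2
      · have hd1 : d = 1 := by omega
        subst hd1
        have hsum : ∑ i ∈ range 2, N.card.choose i = 1 + N.card := by
          simp [Finset.sum_range_succ]
        rw [hsum] at hkey
        have h3 : 2 ^ m ≤ m * k + 1 := by omega
        rw [pow_one]
        by_contra hcon
        push_neg at hcon
        have heq : 2 ^ m = m * k + 1 := by omega
        have hm2 : 2 ≤ m := by
          by_contra hcon2
          have hmm : m = 1 := by omega
          rw [hmm] at heq
          norm_num at heq
          omega
        have hdvd : m ∣ 2 ^ m - 1 := ⟨k, by omega⟩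
        exact aux_not_dvd_two_pow_sub_one m hm2 hdvd
      · calc 2 ^ m ≤ ∑ i ∈ range (d+1), N.card.choose i := hkey
          _ ≤ N.card ^ d := aux_sum_choose_le_pow N.card d hn hd2
          _ ≤ (m * k) ^ d := Nat.pow_le_pow_left hnmk d
  refine ⟨part1, ?_⟩
  have hd0 : (0:ℝ) < d := by exact_mod_cast hd
  have hm0 : (0:ℝ) < m := by exact_mod_cast hm1
  have hk0 : (0:ℝ) < k := by
    have : (2:ℝ) ≤ k := by exact_mod_cast hk
    linarith
  have hmk0 : (0:ℝ) < (m:ℝ) * k := by positivity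
  have hsum2 : ((2:ℝ)) ^ m ≤ Real.exp d * (((m:ℝ) * k) / d) ^ d := by
    have hstep : (2:ℕ) ^ m ≤ ∑ i ∈ range (d+1), (m * k).choose i :=
      le_trans hkey (Finset.sum_le_sum (fun i _ => Nat.choose_le_choose i hnmk))
    have hcast : ((2:ℝ)) ^ m ≤ ((∑ i ∈ range (d+1), (m * k).choose i : ℕ) : ℝ) := by
      exact_mod_cast hstep
    have := aux_sum_choose_le_exp (m * k) d hd hdmk
    have hc2 : (((m * k : ℕ)) : ℝ) = (m : ℝ) * k := by push_cast; ring
    rw [hc2] at this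
    linarith
  have hlog1 : (m:ℝ) * Real.log 2 ≤ d + d * Real.log (((m:ℝ) * k) / d) := by
    have hx : (0:ℝ) < ((m:ℝ) * k) / d := by positivity
    have hlhs : (0:ℝ) < (2:ℝ) ^ m := by positivity
    have h := Real.log_le_log hlhs hsum2
    rw [Real.log_pow, Real.log_mul (Real.exp_ne_zero _) (by positivity), Real.log_exp,
      Real.log_pow] at h
    exact_mod_cast h
  have hsplit : Real.log (((m:ℝ) * k) / d) = Real.log ((m:ℝ) / d) + Real.log k := by
    rw [show ((m:ℝ) * k) / d = ((m:ℝ) / d) * k by ring,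
      Real.log_mul (by positivity) (ne_of_gt hk0)]
  have hlogmd : Real.log ((m:ℝ) / d) ≤ ((m:ℝ) / d) / 2 := aux_log_le_half _ (by positivity)
  have hmain : (m:ℝ) * Real.log 2 ≤ d + m / 2 + d * Real.log k := by
    have h4 : d * Real.log ((m:ℝ) / d) ≤ (m:ℝ) / 2 := by
      calc (d:ℝ) * Real.log ((m:ℝ) / d) ≤ d * (((m:ℝ) / d) / 2) :=
            mul_le_mul_of_nonneg_left hlogmd hd0.le
        _ = (m:ℝ) / 2 := by field_simp
    rw [hsplit] at hlog1
    nlinarith [hlog1, h4]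
  have l2a : (0.6931:ℝ) < Real.log 2 := by
    have := Real.log_two_gt_d9; linarith
  have l2b : Real.log 2 < 0.6932 := by
    have := Real.log_two_lt_d9; linarith
  have hlk : Real.log 2 ≤ Real.log k :=
    Real.log_le_log (by norm_num) (by exact_mod_cast hk)
  have hlk1 : Real.log (k:ℝ) ≤ Real.log ((k:ℝ) + 1) := Real.log_le_log hk0 (by linarith)
  have hlog2pos : (0:ℝ) < Real.log 2 := by linarith
  rw [Real.logb]
  rw [show (100:ℝ) * (d:ℝ) * (Real.log ((k:ℝ)+1) / Real.log 2)
      = 100 * (d:ℝ) * Real.log ((k:ℝ)+1) / Real.log 2 from by ring]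
  rw [le_div_iff₀ hlog2pos]
  have h5 : (d:ℝ) * Real.log (k:ℝ) ≤ (d:ℝ) * Real.log ((k:ℝ)+1) :=
    mul_le_mul_of_nonneg_left hlk1 hd0.le
  have h6 : (d:ℝ) * Real.log 2 ≤ (d:ℝ) * Real.log (k:ℝ) :=
    mul_le_mul_of_nonneg_left hlk hd0.le
  have h7 : (m:ℝ) * (0.6931:ℝ) ≤ (m:ℝ) * Real.log 2 :=
    mul_le_mul_of_nonneg_left l2a.le hm0.le
  have h8 : (d:ℝ) * (0.6931:ℝ) ≤ (d:ℝ) * Real.log 2 :=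
    mul_le_mul_of_nonneg_left l2a.le hd0.le
  linarith [hmain, h5, h6, h7, h8]
end

section
/- In the construction of Theorem A (lower bound), the hypothesis class H_n = {h_Z : Z ⊆ [n]} on ℝ, where h_Z(x) = 1 iff x = x_j + r/(p_{f(Z)})^m for some j ∈ Z and m ∈ ℕ (with x₁,…,x_n pairwise at distance > 2r(1+g), p_i an enumeration of primes, and f : 2^{[n]} → [2^n] injective), has VC dimension exactly 1: every point of ℝ is labeled 1 by at most one hypothesis in H_n, hence no 2-point set is shattered, while some 1-point set is. -/
/-- A set system `F` on `Z` shatters the finite set `K`. -/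
def ShattersSys {Z : Type*} (F : Set (Set Z)) (K : Finset Z) : Prop :=
  ∀ T ⊆ K, ∃ A ∈ F, ∀ z ∈ K, (z ∈ A ↔ z ∈ T)

/-- The lower-bound construction of Theorem A: the class
`H_n = {h_Z : Z ⊆ [n]}` on `ℝ`, where the 1-set of `h_Z` is
`{x_j + r/(p_{f(Z)})^m : j ∈ Z, m ≥ 1}`, has VC dimension exactly 1:
distinct hypotheses have disjoint 1-sets (every point is labeled 1 by at most one
hypothesis), hence no 2-point set is shattered, while some 1-point set is. -/
theorem stmt16 (r g : ℝ) (hr : 0 < r) (hg : 0 < g) (n : ℕ) (hn : 0 < n)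
    (x : Fin n → ℝ) (hx : ∀ j j', j ≠ j' → 2 * r * (1 + g) < |x j - x j'|)
    (p : ℕ → ℕ) (hp : ∀ i, Nat.Prime (p i)) (hpmono : StrictMono p)
    (f : Finset (Fin n) → ℕ) (hfinj : Function.Injective f)
    (hf1 : ∀ Z, 1 ≤ f Z) (hf2 : ∀ Z, f Z ≤ 2 ^ n) :
    let Hn : Set (Set ℝ) :=
      {A | ∃ Z : Finset (Fin n),
        A = {t | ∃ j ∈ Z, ∃ m : ℕ, 0 < m ∧ t = x j + r / ((p (f Z) : ℝ)) ^ m}}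
    (∀ t : ℝ, ∀ A ∈ Hn, ∀ B ∈ Hn, t ∈ A → t ∈ B → A = B) ∧
    (∀ K : Finset ℝ, ShattersSys Hn K → K.card ≤ 1) ∧
    (∃ K : Finset ℝ, K.card = 1 ∧ ShattersSys Hn K) := by
  intro Hn
  have hbd : ∀ (Z : Finset (Fin n)) (m : ℕ), 0 < m →
      0 < r / ((p (f Z) : ℝ)) ^ m ∧ r / ((p (f Z) : ℝ)) ^ m ≤ r / 2 := by
    intro Z m hm
    have hq := (hp (f Z)).two_le
    have h2 : (2:ℝ) ≤ ((p (f Z) : ℝ)) ^ m := by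
      calc (2:ℝ) = 2 ^ 1 := by norm_num
        _ ≤ (2:ℝ) ^ m := by exact pow_le_pow_right₀ (by norm_num) hm
        _ ≤ ((p (f Z) : ℝ)) ^ m := by
            apply pow_le_pow_left₀ (by norm_num)
            exact_mod_cast hq
    have hpos : (0:ℝ) < ((p (f Z) : ℝ)) ^ m := by linarith
    exact ⟨div_pos hr hpos, div_le_div_of_nonneg_left hr.le (by norm_num) h2⟩
  have key : ∀ t : ℝ, ∀ A ∈ Hn, ∀ B ∈ Hn, t ∈ A → t ∈ B → A = B := by
    rintro t A ⟨Z, rfl⟩ B ⟨Z', rfl⟩ ⟨j, hj, m, hm, rfl⟩ ⟨j', hj', m', hm', ht'⟩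
    obtain ⟨h1, h2⟩ := hbd Z m hm
    obtain ⟨h1', h2'⟩ := hbd Z' m' hm'
    have hjj : j = j' := by
      by_contra hne
      have := hx j j' hne
      have hxd : x j - x j' = r / ((p (f Z') : ℝ)) ^ m' - r / ((p (f Z) : ℝ)) ^ m := by
        linarith
      have : |x j - x j'| ≤ r := by
        rw [hxd, abs_le]
        constructor <;> linarith
      nlinarith
    subst hjj
    have heq : r / ((p (f Z) : ℝ)) ^ m = r / ((p (f Z') : ℝ)) ^ m' := by linarith
    have hPQ : ((p (f Z) : ℝ)) ^ m = ((p (f Z') : ℝ)) ^ m' := by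
      have hc1 : (0:ℝ) < (p (f Z) : ℝ) := by exact_mod_cast (hp (f Z)).pos
      have hc2 : (0:ℝ) < (p (f Z') : ℝ) := by exact_mod_cast (hp (f Z')).pos
      have hne1 : ((p (f Z) : ℝ)) ^ m ≠ 0 := by positivity
      have hne2 : ((p (f Z') : ℝ)) ^ m' ≠ 0 := by positivity
      rw [div_eq_div_iff hne1 hne2] at heq
      exact (mul_left_cancel₀ hr.ne' heq).symm
    have hnat : (p (f Z)) ^ m = (p (f Z')) ^ m' := by exact_mod_cast hPQ
    have hdvd : p (f Z) ∣ p (f Z') := by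
      have : p (f Z) ∣ (p (f Z')) ^ m' := hnat ▸ dvd_pow_self _ hm.ne'
      exact (hp (f Z)).dvd_of_dvd_pow this
    have hpp : p (f Z) = p (f Z') :=
      ((Nat.prime_dvd_prime_iff_eq (hp _) (hp _)).mp hdvd)
    have hZZ : Z = Z' := hfinj (hpmono.injective hpp)
    subst hZZ
    rfl
  refine ⟨key, ?_, ?_⟩
  · intro K hK
    by_contra hcard
    push_neg at hcard
    obtain ⟨a, ha, b, hb, hab⟩ := Finset.one_lt_card.mp hcard
    obtain ⟨A, hA, hAspec⟩ := hK {a} (by simp [Finset.singleton_subset_iff, ha])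
    obtain ⟨B, hB, hBspec⟩ := hK {a, b} (by
      intro z hz
      simp only [Finset.mem_insert, Finset.mem_singleton] at hz
      rcases hz with rfl | rfl <;> assumption)
    have haA : a ∈ A := (hAspec a ha).mpr (by simp)
    have hbA : b ∉ A := fun h => hab (Finset.mem_singleton.mp ((hAspec b hb).mp h)).symm
    have haB : a ∈ B := (hBspec a ha).mpr (by simp)
    have hbB : b ∈ B := (hBspec b hb).mpr (by simp)
    have : A = B := key a A hA B hB haA haB
    exact hbA (this ▸ hbB)
  · have j0 : Fin n := ⟨0, hn⟩
    refine ⟨{x j0 + r / ((p (f {j0}) : ℝ)) ^ 1}, Finset.card_singleton _, ?_⟩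
    intro T hT
    by_cases hmem : x j0 + r / ((p (f {j0}) : ℝ)) ^ 1 ∈ T
    · refine ⟨_, ⟨{j0}, rfl⟩, ?_⟩
      intro z hz
      rw [Finset.mem_singleton] at hz
      subst hz
      simp only [Set.mem_setOf_eq]
      constructor
      · intro _; exact hmem
      · intro _; exact ⟨j0, Finset.mem_singleton_self _, 1, one_pos, rfl⟩
    · refine ⟨_, ⟨∅, rfl⟩, ?_⟩
      intro z hz
      rw [Finset.mem_singleton] at hz
      subst hz
      simp only [Set.mem_setOf_eq]
      constructor
      · rintro ⟨j, hj, _⟩; exact absurd hj (Finset.notMem_empty j)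
      · intro h
        exact absurd h hmem
end
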